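/- In any non-right triangle ABC, if the 2-trisectors from A and B are equal (i.e., cevians AA₁, BB₁ with ∠BAA₁ = 2∠BAC and ∠ABB₁ = 2∠ABC, and AA₁ = BB₁), then the triangle is isosceles. -/

import Mathlib

open EuclideanGeometry Real

noncomputable section

/-- The Euclidean plane. -/
abbrev Pt : Type := EuclideanSpace ℝ (Fin 2)

lemma exists_oriented_isometry
    [Fact (Module.finrank ℝ (EuclideanSpace ℝ (Fin 2)) = 2)]
    [Module.Oriented ℝ (EuclideanSpace ℝ (Fin 2)) (Fin 2)] :
    ∃ f : EuclideanSpace ℝ (Fin 2) ≃ₗᵢ[ℝ] ℂ,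
      Orientation.map (Fin 2) f.toLinearEquiv
        (Module.Oriented.positiveOrientation) = Complex.orientation := by
  set o : Orientation ℝ (EuclideanSpace ℝ (Fin 2)) (Fin 2) :=
    Module.Oriented.positiveOrientation with ho
  let b := o.finOrthonormalBasis (by norm_num) Fact.out
  refine ⟨b.repr.trans Complex.orthonormalBasisOneI.repr.symm, ?_⟩
  have hb : b.toBasis.orientation = o := Orientation.finOrthonormalBasis_orientation _ _ _
  rw [← hb, ← Module.Basis.orientation_map]
  rw [show Complex.orientation = Complex.basisOneI.orientation from rfl]
  congr 1
  apply Module.Basis.eq_of_apply_eq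
  intro i
  rw [Module.Basis.map_apply]
  simp only [OrthonormalBasis.coe_toBasis, LinearIsometryEquiv.coe_toLinearEquiv,
    LinearIsometryEquiv.trans_apply, OrthonormalBasis.repr_self,
    OrthonormalBasis.repr_symm_single]
  rw [← Complex.toBasis_orthonormalBasisOneI]
  simp [OrthonormalBasis.coe_toBasis]

lemma arg_two_zsmul_aux {z w : ℂ} (hz : z ≠ 0) (hw : w ≠ 0)
    (h : (Complex.arg z : Real.Angle) = (2 : ℤ) • (Complex.arg w : Real.Angle)) :
    ∃ r : ℝ, 0 < r ∧ z = (r : ℂ) * (w * w) := by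
  have h2 : ((w * w).arg : Real.Angle) = (2 : ℤ) • (Complex.arg w : Real.Angle) := by
    rw [Complex.arg_mul_coe_angle hw hw, two_zsmul]
  rw [← h2, Complex.arg_coe_angle_eq_iff,
    Complex.arg_eq_arg_iff hz (mul_ne_zero hw hw)] at h
  refine ⟨‖z‖ / norm (w * w),
    div_pos (norm_pos_iff.mpr hz) (norm_pos_iff.mpr (mul_ne_zero hw hw)), ?_⟩
  have hz' : (‖z‖ : ℂ) ≠ 0 := by
    exact_mod_cast norm_ne_zero_iff.mpr hz
  have hw' : (‖w‖ : ℂ) ≠ 0 := by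
    exact_mod_cast norm_ne_zero_iff.mpr hw
  rw [← h]
  push_cast
  field_simp [hz', hw']
  congr 1
  rw [norm_div, norm_mul, Complex.norm_real, Complex.norm_real, norm_norm, norm_norm]
  field_simp

set_option maxHeartbeats 1000000 in

set_option maxHeartbeats 1000000 in
lemma core_lemma {c : ℂ} {t s : ℝ} (hc : c.im ≠ 0)
    (hC : c.re ^ 2 + c.im ^ 2 - c.re ≠ 0)
    (h1 : (Complex.arg (1 + (t : ℂ) * (c - 1)) : Real.Angle)
        = (2 : ℤ) • (Complex.arg c : Real.Angle))
    (h2 : (Complex.arg (1 - (s : ℂ) * c) : Real.Angle)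
        = (2 : ℤ) • (Complex.arg (1 - c) : Real.Angle))
    (hlen : norm (1 + (t : ℂ) * (c - 1)) = norm (1 - (s : ℂ) * c)) :
    ‖c‖ = norm (c - 1) := by
  have hc0 : c ≠ 0 := fun h => hc (by simp [h])
  have h1c : (1 : ℂ) - c ≠ 0 := by
    intro h
    apply hc
    have hce : c = 1 := by linear_combination -h
    simp [hce]
  have hz1 : 1 + (t : ℂ) * (c - 1) ≠ 0 := by
    intro h
    have him := congrArg Complex.im h
    have hre := congrArg Complex.re h
    simp [Complex.add_im, Complex.add_re, Complex.mul_im, Complex.mul_re] at him hre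
    rcases him with h' | h'
    · rw [h'] at hre; simp at hre
    · exact hc h'
  have hz2 : 1 - (s : ℂ) * c ≠ 0 := by
    intro h
    have him := congrArg Complex.im h
    have hre := congrArg Complex.re h
    simp [Complex.sub_im, Complex.sub_re, Complex.mul_im, Complex.mul_re] at him hre
    rcases him with h' | h'
    · rw [h'] at hre; simp at hre
    · exact hc h'
  set x := c.re with hx
  set y := c.im with hy
  obtain ⟨r, hr, he1⟩ := arg_two_zsmul_aux hz1 hc0 h1
  obtain ⟨r', hr', he2⟩ := arg_two_zsmul_aux hz2 h1c h2
  -- components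
  have e1re := congrArg Complex.re he1
  have e1im := congrArg Complex.im he1
  have e2re := congrArg Complex.re he2
  have e2im := congrArg Complex.im he2
  simp only [Complex.add_re, Complex.add_im, Complex.sub_re, Complex.sub_im, Complex.mul_re,
    Complex.mul_im, Complex.one_re, Complex.one_im, Complex.ofReal_re, Complex.ofReal_im,
    ← hx, ← hy] at e1re e1im e2re e2im
  -- derive t = 2 r x and s = 2 r' (1 - x)
  have ht : t = 2 * r * x := by
    have h' : (t - 2 * r * x) * y = 0 := by linear_combination e1im
    rcases mul_eq_zero.mp h' with h' | h'
    · linarith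
    · exact absurd h' hc
  have hs : s = 2 * r' * (1 - x) := by
    have h' : (s - 2 * r' * (1 - x)) * y = 0 := by linear_combination -e2im
    rcases mul_eq_zero.mp h' with h' | h'
    · linarith
    · exact absurd h' hc
  have key1 : r * (1 - ((1 - x) ^ 2 + y ^ 2)) = 1 := by
    rw [ht] at e1re; linear_combination -e1re
  have key2 : r' * (1 - (x ^ 2 + y ^ 2)) = 1 := by
    rw [hs] at e2re; linear_combination -e2re
  -- lengths
  have habs : ∀ z : ℂ, ‖z‖ * ‖z‖ = z.re ^ 2 + z.im ^ 2 := by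
    intro z
    rw [show ‖z‖ * ‖z‖ = ‖z‖ ^ 2 by ring, Complex.sq_norm,
      Complex.normSq_apply]
    ring
  have hlen' : r * (x ^ 2 + y ^ 2) = r' * ((1 - x) ^ 2 + y ^ 2) := by
    rw [he1, he2] at hlen
    simp only [norm_mul, Complex.norm_real, Real.norm_eq_abs] at hlen
    rw [abs_of_pos hr, abs_of_pos hr'] at hlen
    have h1' := habs c
    have h2' := habs (1 - c)
    simp only [Complex.sub_re, Complex.sub_im, Complex.one_re, Complex.one_im,
      ← hx, ← hy] at h1' h2'
    nlinarith [hlen, h1', h2']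
  -- final algebra
  set p := x ^ 2 + y ^ 2 with hp
  set q := (1 - x) ^ 2 + y ^ 2 with hq
  have hpq : p * (1 - p) = q * (1 - q) := by
    linear_combination (1 - p) * (1 - q) * hlen' - p * (1 - p) * key1 + q * (1 - q) * key2
  have hzero : (p - q) * (1 - p - q) = 0 := by linear_combination hpq
  have hne : 1 - p - q ≠ 0 := by
    intro h
    apply hC
    have hh : 1 - p - q = -2 * (p - x) := by rw [hp, hq]; ring
    linarith [hh ▸ h]
  have hpqe : p = q := by
    rcases mul_eq_zero.mp hzero with h | h
    · linarith
    · exact absurd h hne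
  have h1' := habs c
  have h2' := habs (c - 1)
  simp only [Complex.sub_re, Complex.sub_im, Complex.one_re, Complex.one_im,
    ← hx, ← hy] at h1' h2'
  nlinarith [h1', h2', hpqe, norm_nonneg c, norm_nonneg (c - 1)]

lemma complex_main (a b c a1 b1 : ℂ) (t s : ℝ)
    (hab : b - a ≠ 0)
    (him : ((c - a) / (b - a)).im ≠ 0)
    (ht : a1 - b = (t : ℂ) * (c - b)) (hs : b1 - a = (s : ℂ) * (c - a))
    (h1 : (Complex.arg ((a1 - a) / (b - a)) : Real.Angle)
        = (2 : ℤ) • (Complex.arg ((c - a) / (b - a)) : Real.Angle))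
    (h2 : (Complex.arg ((b1 - b) / (a - b)) : Real.Angle)
        = (2 : ℤ) • (Complex.arg ((c - b) / (a - b)) : Real.Angle))
    (hCinner : ((starRingEnd ℂ) (a - c) * (b - c)).re ≠ 0)
    (hlen : norm (a - a1) = norm (b - b1)) :
    norm (a - c) = norm (b - c) := by
  have hab' : a - b ≠ 0 := fun h => hab (by linear_combination -h)
  obtain ⟨c0, hc0⟩ : ∃ z : ℂ, z = (c - a) / (b - a) := ⟨_, rfl⟩
  rw [← hc0] at him h1
  have hca : c - a = c0 * (b - a) := by rw [hc0]; field_simp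
  -- rewrite the four quotients
  have ea1 : (a1 - a) / (b - a) = 1 + (t : ℂ) * (c0 - 1) := by
    rw [div_eq_iff hab]
    linear_combination ht + (t : ℂ) * hca
  have eb1 : (b1 - b) / (a - b) = 1 - (s : ℂ) * c0 := by
    rw [div_eq_iff hab']
    linear_combination hs + (s : ℂ) * hca
  have ecb : (c - b) / (a - b) = 1 - c0 := by
    rw [div_eq_iff hab']
    linear_combination hca
  rw [ea1] at h1
  rw [eb1, ecb] at h2
  -- the inner product condition
  have hCre : c0.re ^ 2 + c0.im ^ 2 - c0.re ≠ 0 := by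
    intro h
    apply hCinner
    have hac : a - c = -(c0 * (b - a)) := by linear_combination -hca
    have hbc : b - c = (1 - c0) * (b - a) := by linear_combination -hca
    have hre : ((starRingEnd ℂ) (a - c) * (b - c)).re
        = ((b - a).re ^ 2 + (b - a).im ^ 2) * (c0.re ^ 2 + c0.im ^ 2 - c0.re) := by
      rw [hac, hbc]
      simp only [map_neg, map_mul, map_sub, map_one, Complex.mul_re, Complex.mul_im,
        Complex.neg_re, Complex.neg_im, Complex.sub_re, Complex.sub_im, Complex.one_re,
        Complex.one_im, Complex.conj_re, Complex.conj_im]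
      ring
    rw [hre, h, mul_zero]
  -- the length condition
  have hba : norm (b - a) ≠ 0 := norm_ne_zero_iff.mpr hab
  have hlen' : norm (1 + (t : ℂ) * (c0 - 1)) = norm (1 - (s : ℂ) * c0) := by
    have ea1' := (div_eq_iff hab).mp ea1
    have eb1' := (div_eq_iff hab').mp eb1
    have h1' : a - a1 = -((1 + (t : ℂ) * (c0 - 1)) * (b - a)) := by
      linear_combination -ea1'
    have h2' : b - b1 = (1 - (s : ℂ) * c0) * (b - a) := by
      linear_combination -eb1'

    rw [h1', h2'] at hlen
    simp only [norm_neg, norm_mul] at hlen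
    exact mul_right_cancel₀ hba hlen
  -- apply the core lemma
  have hmain := core_lemma him hCre h1 h2 hlen'
  have hac : a - c = -(c0 * (b - a)) := by linear_combination -hca
  have hbc : b - c = -((c0 - 1) * (b - a)) := by linear_combination -hca
  rw [hac, hbc, norm_neg, norm_neg, norm_mul, norm_mul, hmain]

/-- In a non-right triangle `ABC`, if the `2`-trisectors from `A` and `B` are equal
cevians, then the triangle is isosceles. -/
theorem isosceles_of_equal_two_trisectors
    [Fact (Module.finrank ℝ (EuclideanSpace ℝ (Fin 2)) = 2)]
    [Module.Oriented ℝ (EuclideanSpace ℝ (Fin 2)) (Fin 2)]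
    (A B C A₁ B₁ : Pt)
    (hABC : AffineIndependent ℝ ![A, B, C])
    (hnrA : ∠ B A C ≠ π / 2) (hnrB : ∠ A B C ≠ π / 2) (hnrC : ∠ A C B ≠ π / 2)
    (hA₁ : A₁ ∈ affineSpan ℝ ({B, C} : Set Pt)) (hA₁B : A₁ ≠ B) (hA₁C : A₁ ≠ C)
    (hB₁ : B₁ ∈ affineSpan ℝ ({A, C} : Set Pt)) (hB₁A : B₁ ≠ A) (hB₁C : B₁ ≠ C)
    (htriA : ∡ B A A₁ = (2 : ℤ) • ∡ B A C)
    (htriB : ∡ A B B₁ = (2 : ℤ) • ∡ A B C)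
    (hlen : dist A A₁ = dist B B₁) :
    dist A C = dist B C := by
  obtain ⟨f, hf⟩ := exists_oriented_isometry
  have hABne : A ≠ B := by
    have := hABC.injective.ne (show (0 : Fin 3) ≠ 1 by decide)
    simpa using this
  have hab : f B - f A ≠ 0 := sub_ne_zero.mpr fun h => hABne (f.injective h).symm
  have hab' : f A - f B ≠ 0 := sub_ne_zero.mpr fun h => hABne (f.injective h)
  -- oriented angle transfer
  have harg : ∀ p q r : Pt, f p - f q ≠ 0 →
      ∡ p q r = (Complex.arg ((f r - f q) / (f p - f q)) : Real.Angle) := by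
    intro p q r hne
    have h0 : ∡ p q r
        = (Complex.arg ((starRingEnd ℂ) (f (p -ᵥ q)) * f (r -ᵥ q)) : Real.Angle) :=
      Orientation.oangle_map_complex _ f hf _ _
    have hv1 : f (p -ᵥ q) = f p - f q := by rw [vsub_eq_sub, map_sub]
    have hv2 : f (r -ᵥ q) = f r - f q := by rw [vsub_eq_sub, map_sub]
    rw [h0, hv1, hv2]
    have hmul : (starRingEnd ℂ) (f p - f q) * (f r - f q)
        = ((Complex.normSq (f p - f q) : ℝ) : ℂ) * ((f r - f q) / (f p - f q)) := by
      rw [Complex.normSq_eq_conj_mul_self]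
      field_simp
    rw [hmul, Complex.arg_real_mul _ (Complex.normSq_pos.mpr hne)]
  -- extract parameters on the lines
  have hA₁' : (A₁ -ᵥ B) +ᵥ B ∈ affineSpan ℝ ({B, C} : Set Pt) := by
    rwa [vsub_vadd]
  obtain ⟨t, ht⟩ := vadd_left_mem_affineSpan_pair.mp hA₁'
  have hB₁' : (B₁ -ᵥ A) +ᵥ A ∈ affineSpan ℝ ({A, C} : Set Pt) := by
    rwa [vsub_vadd]
  obtain ⟨s, hs⟩ := vadd_left_mem_affineSpan_pair.mp hB₁'
  have htC : f A₁ - f B = (t : ℂ) * (f C - f B) := by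
    have h' := congrArg f ht
    rw [map_smul] at h'
    rw [vsub_eq_sub, vsub_eq_sub, map_sub, map_sub] at h'
    rw [← h', Complex.real_smul]
  have hsC : f B₁ - f A = (s : ℂ) * (f C - f A) := by
    have h' := congrArg f hs
    rw [map_smul] at h'
    rw [vsub_eq_sub, vsub_eq_sub, map_sub, map_sub] at h'
    rw [← h', Complex.real_smul]
  -- non-collinearity gives the imaginary part condition
  have him : ((f C - f A) / (f B - f A)).im ≠ 0 := by
    intro h
    set z : ℂ := (f C - f A) / (f B - f A) with hz
    have hzr : z = (z.re : ℂ) := Complex.ext rfl (by simpa using h)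
    have hCA : f C - f A = (z.re : ℂ) * (f B - f A) := by
      rw [← hzr, hz]
      field_simp
    have hCA' : C -ᵥ A = z.re • (B -ᵥ A) := by
      apply f.injective
      rw [map_smul, vsub_eq_sub, vsub_eq_sub, map_sub, map_sub, Complex.real_smul, hCA]
    have hmem : C ∈ affineSpan ℝ ({A, B} : Set Pt) := by
      have hCe : C = z.re • (B -ᵥ A) +ᵥ A := by rw [← hCA', vsub_vadd]
      rw [hCe]
      exact smul_vsub_vadd_mem_affineSpan_pair _ _ _
    have hcol : Collinear ℝ ({C, A, B} : Set Pt) :=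
      collinear_insert_of_mem_affineSpan_pair hmem
    apply affineIndependent_iff_not_collinear_set.mp hABC
    have : ({A, B, C} : Set Pt) = {C, A, B} := by
      ext w; simp only [Set.mem_insert_iff, Set.mem_singleton_iff]; tauto
    rw [this]
    exact hcol
  -- right angle condition at C
  have hCinner : ((starRingEnd ℂ) (f A - f C) * (f B - f C)).re ≠ 0 := by
    have hi : (inner ℝ (A -ᵥ C) (B -ᵥ C) : ℝ) ≠ 0 := by
      intro h
      exact hnrC (InnerProductGeometry.inner_eq_zero_iff_angle_eq_pi_div_two _ _ |>.mp h)
    rw [mul_comm, ← Complex.inner]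
    rw [show f A - f C = f (A -ᵥ C) from by rw [vsub_eq_sub, map_sub],
        show f B - f C = f (B -ᵥ C) from by rw [vsub_eq_sub, map_sub],
        LinearIsometryEquiv.inner_map_map]
    exact hi
  -- angle hypotheses
  have h1 := htriA
  rw [harg B A A₁ hab, harg B A C hab] at h1
  have h2 := htriB
  rw [harg A B B₁ hab', harg A B C hab'] at h2
  -- lengths
  have hlen' : norm (f A - f A₁) = norm (f B - f B₁) := by
    rw [← Complex.dist_eq, ← Complex.dist_eq, f.dist_map, f.dist_map]
    exact hlen
  have hmain := complex_main (f A) (f B) (f C) (f A₁) (f B₁) t s hab him htC hsC h1 h2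
    hCinner hlen'
  rw [show dist A C = dist (f A) (f C) from (f.dist_map _ _).symm,
      show dist B C = dist (f B) (f C) from (f.dist_map _ _).symm,
      Complex.dist_eq, Complex.dist_eq]
  exact hmain
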